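/- Theorem 8 (nesting of the multimodal moment-based ambiguity set in its single-modal counterpart). Let Ω be a measurable space, L a positive natural number, and P : Fin L → Measure Ω a family of probability measures. Let f : Ω → ℝ be measurable and integrable with respect to each P l, and let ul, uu : Fin L → ℝ satisfy 0 ≤ ul l, 0 ≤ uu l, and ul l ≤ ∫ f ∂(P l) ≤ uu l for all l. Let ρ ≥ 0, let p̂ : Fin L → ℝ be a probability vector (p̂ l ≥ 0, ∑ l, p̂ l = 1), and let p : Fin L → ℝ be a probability vector with ∑ l, |p l - p̂ l| ≤ ρ. Then the mixture μ := ∑ l, (ENNReal.ofReal (p l)) • P l is a probability measure on Ω, f is μ-integrable, and ∑ l, (p̂ l - ρ) * ul l ≤ ∫ f ∂μ ≤ ∑ l, (p̂ l + ρ) * uu l. -/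
import Mathlib


open MeasureTheory
open scoped BigOperators ENNReal

/-- Theorem 8 (nesting of the multimodal moment-based ambiguity set in its
single-modal counterpart). -/
theorem multimodal_moment_nesting
    {Ω : Type*} [MeasurableSpace Ω] (L : ℕ) (hL : 0 < L)
    (P : Fin L → Measure Ω) (hP : ∀ l, IsProbabilityMeasure (P l))
    (f : Ω → ℝ) (hf : Measurable f) (hint : ∀ l, Integrable f (P l))
    (ul uu : Fin L → ℝ) (hul : ∀ l, 0 ≤ ul l) (huu : ∀ l, 0 ≤ uu l)
    (hmom : ∀ l, ul l ≤ ∫ ω, f ω ∂(P l) ∧ ∫ ω, f ω ∂(P l) ≤ uu l)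
    (ρ : ℝ) (hρ : 0 ≤ ρ)
    (pHat : Fin L → ℝ) (hpHat0 : ∀ l, 0 ≤ pHat l) (hpHat1 : ∑ l, pHat l = 1)
    (p : Fin L → ℝ) (hp0 : ∀ l, 0 ≤ p l) (hp1 : ∑ l, p l = 1)
    (hvd : ∑ l, |p l - pHat l| ≤ ρ) :
    IsProbabilityMeasure (∑ l, ENNReal.ofReal (p l) • P l) ∧
    Integrable f (∑ l, ENNReal.ofReal (p l) • P l) ∧
    ∑ l, (pHat l - ρ) * ul l ≤ ∫ ω, f ω ∂(∑ l, ENNReal.ofReal (p l) • P l) ∧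
    ∫ ω, f ω ∂(∑ l, ENNReal.ofReal (p l) • P l) ≤ ∑ l, (pHat l + ρ) * uu l := by
  have habs : ∀ l, |p l - pHat l| ≤ ρ := by
    intro l
    refine le_trans ?_ hvd
    exact Finset.single_le_sum (f := fun i => |p i - pHat i|) (fun i _ => abs_nonneg _) (Finset.mem_univ l)
  have hlow : ∀ l, pHat l - ρ ≤ p l := fun l => by
    have := abs_le.mp (habs l); linarith [this.1]
  have hhigh : ∀ l, p l ≤ pHat l + ρ := fun l => by
    have := abs_le.mp (habs l); linarith [this.2]
  have hprob : IsProbabilityMeasure (∑ l, ENNReal.ofReal (p l) • P l) := by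
    constructor
    have : ∀ l : Fin L, (ENNReal.ofReal (p l) • P l) Set.univ = ENNReal.ofReal (p l) := by
      intro l
      simp [Measure.smul_apply, (hP l).measure_univ]
    simp only [Measure.finset_sum_apply, this]
    rw [← ENNReal.ofReal_sum_of_nonneg (fun i _ => hp0 i), hp1, ENNReal.ofReal_one]
  have hintsum : Integrable f (∑ l, ENNReal.ofReal (p l) • P l) := by
    apply integrable_finset_sum_measure.mpr
    intro i _
    exact (hint i).smul_measure ENNReal.ofReal_ne_top
  have hInt : ∫ ω, f ω ∂(∑ l, ENNReal.ofReal (p l) • P l)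
      = ∑ l, p l * ∫ ω, f ω ∂(P l) := by
    rw [integral_finset_sum_measure (fun i _ => (hint i).smul_measure ENNReal.ofReal_ne_top)]
    refine Finset.sum_congr rfl fun l _ => ?_
    rw [integral_smul_measure, ENNReal.toReal_ofReal (hp0 l), smul_eq_mul]
  refine ⟨hprob, hintsum, ?_, ?_⟩
  · rw [hInt]
    refine Finset.sum_le_sum fun l _ => ?_
    have h1 : (pHat l - ρ) * ul l ≤ p l * ul l :=
      mul_le_mul_of_nonneg_right (hlow l) (hul l)
    have h2 : p l * ul l ≤ p l * ∫ ω, f ω ∂(P l) :=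
      mul_le_mul_of_nonneg_left (hmom l).1 (hp0 l)
    linarith
  · rw [hInt]
    refine Finset.sum_le_sum fun l _ => ?_
    have h1 : p l * ∫ ω, f ω ∂(P l) ≤ p l * uu l :=
      mul_le_mul_of_nonneg_left (hmom l).2 (hp0 l)
    have h2 : p l * uu l ≤ (pHat l + ρ) * uu l :=
      mul_le_mul_of_nonneg_right (hhigh l) (huu l)
    linarith
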